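/- Let q be a prime, A a group of exponent q and order q³, B a subgroup of order q of Z(A). Suppose A acts on a finite q'-group G = PH with P a normal abelian A-invariant p-subgroup and H an A-invariant nilpotent p'-subgroup. Then [P, C_H(B)] is contained in the product ∏_{a ∈ A, a≠1} [C_P(a), C_H(a)]. -/

import Mathlib

/-- The fixed-point subgroup of a single automorphism. -/
def autFixed {G : Type*} [Group G] (f : MulAut G) : Subgroup G where
  carrier := {g | f g = g}
  one_mem' := map_one f
  mul_mem' := by intro a b ha hb; simp only [Set.mem_setOf_eq, map_mul] at *; rw [ha, hb]
  inv_mem' := by intro a ha; simp only [Set.mem_setOf_eq, map_inv] at *; rw [ha]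

open scoped commutatorElement



section Prelim

variable {G : Type*} [Group G]

lemma myPowMod {M : Type*} [Monoid M] {σ : M} {q : ℕ} (hσ : σ ^ q = 1) (n : ℕ) :
    σ ^ n = σ ^ (n % q) := by
  conv_lhs => rw [← Nat.div_add_mod n q]
  rw [pow_add, pow_mul, hσ, one_pow, one_mul]

lemma myMemOfPow {R' : Subgroup G} {g : G} {q : ℕ} (hcop : Nat.Coprime q (orderOf g))
    (hg : g ^ q ∈ R') : g ∈ R' := by
  have hbez : ((1:ℕ) : ℤ) = q * Nat.gcdA q (orderOf g) + orderOf g * Nat.gcdB q (orderOf g) := by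
    have := Nat.gcd_eq_gcd_ab q (orderOf g)
    rwa [hcop] at this
  have key : (g ^ (q:ℤ)) ^ Nat.gcdA q (orderOf g) * (g ^ (orderOf g : ℤ)) ^ Nat.gcdB q (orderOf g) = g := by
    rw [← zpow_mul, ← zpow_mul, ← zpow_add, ← hbez]
    norm_num
  have h2 : (g ^ (orderOf g : ℤ)) = 1 := by
    rw [zpow_natCast, pow_orderOf_eq_one]
  rw [h2, one_zpow, mul_one] at key
  rw [← key, zpow_natCast]
  exact Subgroup.zpow_mem R' hg _

lemma myCL [Finite G] {q : ℕ} (hq : q.Prime) (σ : MulAut G) (hσ : σ ^ q = 1)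
    (N : Subgroup G) (hN : ∀ n ∈ N, σ n ∈ N) (hNq : ¬ q ∣ Nat.card N) (z : G)
    (hz : z⁻¹ * σ z ∈ N) : ∃ w : G, σ w = w ∧ z⁻¹ * w ∈ N := by
  haveI := Fact.mk hq
  -- the coset zN as a type
  let C := {x : G // z⁻¹ * x ∈ N}
  have hσC : ∀ m : ℕ, ∀ x : G, z⁻¹ * x ∈ N → z⁻¹ * (σ ^ m) x ∈ N := by
    intro m
    induction m with
    | zero => intro x hx; simpa using hx
    | succ n ih =>
      intro x hx
      have h1 : z⁻¹ * σ ((σ ^ n) x) ∈ N := by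
        have h2 : z⁻¹ * σ ((σ ^ n) x) = (z⁻¹ * σ z) * (σ (z⁻¹ * (σ ^ n) x)) := by
          rw [map_mul, map_inv]; group
        rw [h2]
        exact mul_mem hz (hN _ (ih x hx))
      have h3 : (σ ^ (n+1)) x = σ ((σ ^ n) x) := by
        rw [pow_succ', MulAut.mul_apply]
      rwa [h3]
  have hzpow : ∀ τ : MulAut G, τ ∈ Subgroup.zpowers σ → ∃ m : ℕ, τ = σ ^ m := by
    intro τ hτ
    obtain ⟨k, hk⟩ := Subgroup.mem_zpowers_iff.mp hτ
    refine ⟨(k % q).toNat, ?_⟩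
    have hq0 : (0:ℤ) < (q:ℤ) := by exact_mod_cast hq.pos
    have h1 : σ ^ (k : ℤ) = σ ^ ((k % q).toNat) := by
      conv_lhs => rw [← Int.mul_ediv_add_emod k q]
      rw [zpow_add, zpow_mul, zpow_natCast, hσ, one_zpow, one_mul,
        ← zpow_natCast, Int.toNat_of_nonneg (Int.emod_nonneg k (by positivity))]
    rw [← hk, h1]
  letI : MulAction (Subgroup.zpowers σ) C :=
    { smul := fun τ x => ⟨(τ : MulAut G) x.1, by
        obtain ⟨m, hm⟩ := hzpow τ τ.2
        rw [hm]; exact hσC m x.1 x.2⟩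
      one_smul := fun x => Subtype.ext (by
        show ((1 : Subgroup.zpowers σ) : MulAut G) x.1 = x.1
        simp)
      mul_smul := fun τ₁ τ₂ x => Subtype.ext (by
        show ((τ₁ * τ₂ : Subgroup.zpowers σ) : MulAut G) x.1 = (τ₁ : MulAut G) ((τ₂ : MulAut G) x.1)
        simp [MulAut.mul_apply]) }
  have hP : IsPGroup q (Subgroup.zpowers σ) := by
    intro τ
    refine ⟨1, ?_⟩
    rw [pow_one]
    obtain ⟨m, hm⟩ := hzpow τ τ.2
    have : ((τ ^ q : Subgroup.zpowers σ) : MulAut G) = 1 := by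
      push_cast
      rw [hm, ← pow_mul, mul_comm m, pow_mul, hσ, one_pow]
    exact_mod_cast Subtype.ext this
  have hcardC : Nat.card C = Nat.card N := by
    refine Nat.card_congr ⟨fun x => ⟨z⁻¹ * x.1, x.2⟩, fun n => ⟨z * n.1, by simp⟩, ?_, ?_⟩
    · intro x; ext; simp
    · intro n; ext; simp
  have hfix := hP.nonempty_fixed_point_of_prime_not_dvd_card C (by rwa [hcardC])
  obtain ⟨w, hw⟩ := hfix
  refine ⟨w.1, ?_, w.2⟩
  have := hw ⟨σ, Subgroup.mem_zpowers σ⟩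
  exact congrArg Subtype.val this

end Prelim


section AL

variable {X : Type*} [CommGroup X]

def myNrm (q : ℕ) [NeZero q] (σ : MulAut X) (x : X) : X := ∏ i : ZMod q, (σ ^ i.val) x

def myW (q : ℕ) [NeZero q] (f g : MulAut X) (x : X) : X :=
  ∏ i : ZMod q, ∏ j : ZMod q, (f ^ i.val * g ^ j.val) x

lemma myPowMod' {M : Type*} [Monoid M] {σ : M} {q : ℕ} (hσ : σ ^ q = 1) (n : ℕ) :
    σ ^ n = σ ^ (n % q) := by
  conv_lhs => rw [← Nat.div_add_mod n q]
  rw [pow_add, pow_mul, hσ, one_pow, one_mul]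

variable {q : ℕ} [Fact q.Prime]

instance : NeZero q := ⟨(Fact.out (p := q.Prime)).ne_zero⟩

lemma val_one' : (1 : ZMod q).val = 1 := by
  have : (1:ℕ) < q := (Fact.out (p := q.Prime)).one_lt
  exact ZMod.val_one_eq_one_mod q ▸ Nat.mod_eq_of_lt this

lemma myNrm_fixed (σ : MulAut X) (hσ : σ ^ q = 1) (x : X) :
    σ (myNrm q σ x) = myNrm q σ x := by
  unfold myNrm
  rw [map_prod]
  calc ∏ i : ZMod q, σ ((σ ^ i.val) x) = ∏ i : ZMod q, (σ ^ ((i + 1 : ZMod q)).val) x := by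
        refine Finset.prod_congr rfl (fun i _ => ?_)
        rw [ZMod.val_add, val_one', ← myPowMod' hσ, pow_succ', MulAut.mul_apply]
    _ = ∏ i : ZMod q, (σ ^ i.val) x :=
        Equiv.prod_comp (Equiv.addRight (1 : ZMod q)) (fun i => (σ ^ i.val) x)

lemma myW_fixed_left (f g : MulAut X) (hf : f ^ q = 1) (x : X) :
    f (myW q f g x) = myW q f g x := by
  unfold myW
  rw [map_prod]
  calc ∏ i : ZMod q, f (∏ j : ZMod q, (f ^ i.val * g ^ j.val) x)
      = ∏ i : ZMod q, ∏ j : ZMod q, (f ^ ((i + 1 : ZMod q)).val * g ^ j.val) x := by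
        refine Finset.prod_congr rfl (fun i _ => ?_)
        rw [map_prod]
        refine Finset.prod_congr rfl (fun j _ => ?_)
        rw [ZMod.val_add, val_one', ← myPowMod' hf]
        simp only [pow_succ', MulAut.mul_apply]
    _ = _ := Equiv.prod_comp (Equiv.addRight (1 : ZMod q))
        (fun i => ∏ j : ZMod q, (f ^ i.val * g ^ j.val) x)

lemma myW_fixed_right (f g : MulAut X) (hfg : f * g = g * f) (hg : g ^ q = 1) (x : X) :
    g (myW q f g x) = myW q f g x := by
  unfold myW
  rw [map_prod]
  have hcomm : ∀ n : ℕ, g * f ^ n = f ^ n * g := fun n =>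
    (Commute.pow_right (show Commute g f from hfg.symm) n)
  calc ∏ i : ZMod q, g (∏ j : ZMod q, (f ^ i.val * g ^ j.val) x)
      = ∏ i : ZMod q, ∏ j : ZMod q, (f ^ i.val * g ^ ((j + 1 : ZMod q)).val) x := by
        refine Finset.prod_congr rfl (fun i _ => ?_)
        rw [map_prod]
        refine Finset.prod_congr rfl (fun j _ => ?_)
        rw [ZMod.val_add, val_one', ← myPowMod' hg, pow_succ', ← mul_assoc, ← hcomm,
          mul_assoc]
        simp only [MulAut.mul_apply]
    _ = _ := Finset.prod_congr rfl (fun i _ =>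
        Equiv.prod_comp (Equiv.addRight (1 : ZMod q))
          (fun j => (f ^ i.val * g ^ j.val) x))

lemma myAL (f g : MulAut X) (hfg : f * g = g * f) (hf : f ^ q = 1) (hg : g ^ q = 1) (x : X) :
    x ^ q = ((∏ j : ZMod q, myNrm q (f * g ^ (j : ZMod q).val) x) * myNrm q g x)
      * (myW q f g x)⁻¹ := by
  have hcq : Fintype.card (ZMod q) = q := ZMod.card q
  have key : (∏ j : ZMod q, myNrm q (f * g ^ (j : ZMod q).val) x)
      = x ^ q * ∏ i ∈ Finset.univ.erase (0 : ZMod q), ∏ j : ZMod q, (f ^ i.val * g ^ j.val) x := by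
    have step1 : ∀ j i : ZMod q, ((f * g ^ j.val) ^ i.val) x = (f ^ i.val * g ^ (j * i).val) x := by
      intro j i
      rw [(Commute.pow_right (show Commute f g from hfg) j.val).mul_pow, ← pow_mul,
        ZMod.val_mul, ← myPowMod' hg]
    have step2 : (∏ j : ZMod q, myNrm q (f * g ^ (j : ZMod q).val) x)
        = ∏ i : ZMod q, ∏ j : ZMod q, (f ^ i.val * g ^ (j * i).val) x := by
      rw [Finset.prod_comm]
      exact Finset.prod_congr rfl (fun j _ => Finset.prod_congr rfl (fun i _ => step1 j i))
    rw [step2, ← Finset.mul_prod_erase Finset.univ _ (Finset.mem_univ (0 : ZMod q))]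
    congr 1
    · calc ∏ j : ZMod q, (f ^ (0 : ZMod q).val * g ^ (j * 0).val) x
          = ∏ _j : ZMod q, x := by
            refine Finset.prod_congr rfl (fun j _ => ?_)
            rw [ZMod.val_zero, mul_zero, ZMod.val_zero, pow_zero, pow_zero, mul_one]
            rfl
        _ = x ^ q := by rw [Finset.prod_const, Finset.card_univ, hcq]
    · refine Finset.prod_congr rfl (fun i hi => ?_)
      have hi0 : i ≠ 0 := (Finset.mem_erase.mp hi).1
      exact Equiv.prod_comp (Equiv.mulRight₀ i hi0) (fun j => (f ^ i.val * g ^ j.val) x)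
  have hW : myW q f g x = (∏ j : ZMod q, (f ^ (0:ZMod q).val * g ^ j.val) x)
      * ∏ i ∈ Finset.univ.erase (0 : ZMod q), ∏ j : ZMod q, (f ^ i.val * g ^ j.val) x := by
    rw [myW, ← Finset.mul_prod_erase Finset.univ _ (Finset.mem_univ (0 : ZMod q))]
  have hN : myNrm q g x = ∏ j : ZMod q, (f ^ (0:ZMod q).val * g ^ j.val) x := by
    refine Finset.prod_congr rfl (fun j _ => ?_)
    rw [ZMod.val_zero, pow_zero, one_mul]
  have helperX : ∀ a b c : X, ((a * b) * c) * ((c * b)⁻¹) = a := by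
    intro a b c
    have h1 : (a * b) * c = a * (c * b) := by rw [mul_assoc, mul_comm b c]
    rw [h1, mul_inv_cancel_right]
  rw [key, hN, hW]
  exact (helperX _ _ _).symm

end AL

section Machinery

variable {G : Type*} [Group G]

def rAut (σ : MulAut G) (K : Subgroup G) (h : K.map σ.toMonoidHom = K) : MulAut ↥K :=
  (σ.subgroupMap K).trans (MulEquiv.subgroupCongr h)

lemma rAut_apply (σ : MulAut G) (K : Subgroup G) (h : K.map σ.toMonoidHom = K) (x : ↥K) :
    (↑(rAut σ K h x) : G) = σ ↑x := rfl

lemma rAut_pow_apply (σ : MulAut G) (K : Subgroup G) (h : K.map σ.toMonoidHom = K) (n : ℕ) :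
    ∀ x : ↥K, (↑((rAut σ K h ^ n) x) : G) = (σ ^ n) ↑x := by
  induction n with
  | zero => intro x; simp
  | succ n ih =>
    intro x
    rw [pow_succ, pow_succ, MulAut.mul_apply, MulAut.mul_apply, ih, rAut_apply]

lemma rAut_inv_apply (σ : MulAut G) (K : Subgroup G) (h : K.map σ.toMonoidHom = K) (x : ↥K) :
    (↑((rAut σ K h)⁻¹ x) : G) = σ⁻¹ ↑x := by
  apply σ.injective
  have h1 : σ (↑((rAut σ K h)⁻¹ x) : G) = ↑(rAut σ K h ((rAut σ K h)⁻¹ x)) :=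
    (rAut_apply σ K h _).symm
  rw [h1, MulAut.inv_def, MulAut.inv_def, MulEquiv.apply_symm_apply, MulEquiv.apply_symm_apply]

variable {K' : Type*} [Group K']

def commGroupQuot (N : Subgroup K') [N.Normal] (hN : ∀ x y : K', ⁅x, y⁆ ∈ N) :
    CommGroup (K' ⧸ N) :=
  { (inferInstance : Group (K' ⧸ N)) with
    mul_comm := by
      intro a b
      refine QuotientGroup.induction_on a (fun x => ?_)
      refine QuotientGroup.induction_on b (fun y => ?_)
      rw [← QuotientGroup.mk_mul, ← QuotientGroup.mk_mul, QuotientGroup.eq]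
      have h1 : (x * y)⁻¹ * (y * x) = ⁅y⁻¹, x⁻¹⁆ := by
        rw [commutatorElement_def]; group
      rw [h1]; exact hN _ _ }

def qAut (N : Subgroup K') [N.Normal] (e : MulAut K') (he : ∀ x ∈ N, e x ∈ N)
    (he' : ∀ x ∈ N, e⁻¹ x ∈ N) : MulAut (K' ⧸ N) where
  toFun := QuotientGroup.map N N e.toMonoidHom (fun x hx => he x hx)
  invFun := QuotientGroup.map N N (e⁻¹ : MulAut K').toMonoidHom (fun x hx => he' x hx)
  left_inv := by
    intro a
    refine QuotientGroup.induction_on a (fun x => ?_)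
    change (QuotientGroup.mk ((e⁻¹ : MulAut K').toMonoidHom (e.toMonoidHom x)) : K' ⧸ N) = QuotientGroup.mk x
    have h1 : (e⁻¹ : MulAut K').toMonoidHom (e.toMonoidHom x) = x := by
      show (e⁻¹ : MulAut K') (e x) = x
      rw [MulAut.inv_def]
      exact e.symm_apply_apply x
    rw [h1]
  right_inv := by
    intro a
    refine QuotientGroup.induction_on a (fun x => ?_)
    change (QuotientGroup.mk (e.toMonoidHom ((e⁻¹ : MulAut K').toMonoidHom x)) : K' ⧸ N) = QuotientGroup.mk x
    have h1 : e.toMonoidHom ((e⁻¹ : MulAut K').toMonoidHom x) = x := by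
      show e ((e⁻¹ : MulAut K') x) = x
      rw [MulAut.inv_def]
      exact e.apply_symm_apply x
    rw [h1]
  map_mul' := map_mul _

lemma qAut_mk (N : Subgroup K') [N.Normal] (e : MulAut K') (he : ∀ x ∈ N, e x ∈ N)
    (he' : ∀ x ∈ N, e⁻¹ x ∈ N) (x : K') :
    qAut N e he he' (QuotientGroup.mk x) = QuotientGroup.mk (e x) := rfl

lemma liftPowMk (N : Subgroup K') [N.Normal] (Δ : MulAut (K' ⧸ N)) (δ : MulAut K')
    (h : ∀ x, Δ (QuotientGroup.mk x) = QuotientGroup.mk (δ x)) (m : ℕ) :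
    ∀ x, (Δ ^ m) (QuotientGroup.mk x) = QuotientGroup.mk ((δ ^ m) x) := by
  induction m with
  | zero => intro x; simp
  | succ n ih =>
    intro x
    rw [pow_succ, pow_succ, MulAut.mul_apply, MulAut.mul_apply, h, ih]

lemma coePow (K : Subgroup G) (δK : MulAut ↥K) (δ : MulAut G)
    (h : ∀ x : ↥K, (↑(δK x) : G) = δ ↑x) (m : ℕ) :
    ∀ x : ↥K, (↑((δK ^ m) x) : G) = (δ ^ m) ↑x := by
  induction m with
  | zero => intro x; simp
  | succ n ih =>
    intro x
    rw [pow_succ, pow_succ, MulAut.mul_apply, MulAut.mul_apply, ih, h]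

end Machinery

section DEC

variable {G : Type*} [Group G]

lemma myDEC [Finite G] {q : ℕ} (hq : q.Prime)
    (K N : Subgroup G) (hNK : N ≤ K) (hKKN : ∀ x ∈ K, ∀ y ∈ K, ⁅x, y⁆ ∈ N)
    (σ τ : MulAut G)
    (hKσ : K.map σ.toMonoidHom = K) (hKτ : K.map τ.toMonoidHom = K)
    (hNσ : N.map σ.toMonoidHom = N) (hNτ : N.map τ.toMonoidHom = N)
    (hστ : ∀ x ∈ K, σ (τ x) = τ (σ x))
    (hpow : ∀ n : ℕ, (σ * τ ^ n) ^ q = 1) (hτq : τ ^ q = 1)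
    (hNq : ¬ q ∣ Nat.card N) (z : G) (hz : z ∈ K) :
    ∃ l : List G, (∀ w ∈ l, w ∈ K ∧ (σ w = w ∨ τ w = w ∨ ∃ n, n < q ∧ (σ * τ ^ n) w = w)) ∧
      ∃ v ∈ N, z ^ q = l.prod * v := by
  haveI := Fact.mk hq
  -- pointwise invariance facts
  have hNmem : ∀ (δ : MulAut G), N.map δ.toMonoidHom = N → ∀ x ∈ N, δ x ∈ N := by
    intro δ hδ x hx
    rw [← hδ]
    exact ⟨x, hx, rfl⟩
  have hNmem' : ∀ (δ : MulAut G), N.map δ.toMonoidHom = N → ∀ x ∈ N, δ⁻¹ x ∈ N := by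
    intro δ hδ x hx
    rw [← hδ] at hx
    obtain ⟨y, hy, hyx⟩ := hx
    have h2 : δ⁻¹ x = y := by
      rw [← hyx, MulAut.inv_def]
      exact δ.symm_apply_apply y
    rwa [h2]
  have hσq : σ ^ q = 1 := by simpa using hpow 0
  -- the subgroup N as a subgroup of K, and the quotient
  set N' : Subgroup ↥K := N.subgroupOf K with hN'def
  have hmemN' : ∀ x : ↥K, x ∈ N' ↔ (x : G) ∈ N := fun x => Subgroup.mem_subgroupOf
  haveI hN'norm : N'.Normal := by
    constructor
    intro n hn g
    rw [hmemN'] at hn ⊢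
    have h1 : ((g * n * g⁻¹ : ↥K) : G) = ⁅(g : G), (n : G)⁆ * (n : G) := by
      push_cast
      rw [commutatorElement_def]
      group
    rw [h1]
    exact mul_mem (hKKN _ g.2 _ (hNK hn)) hn
  letI instCG : CommGroup (↥K ⧸ N') := commGroupQuot N' (fun x y => by
    rw [hmemN']
    have h1 : ((⁅x, y⁆ : ↥K) : G) = ⁅(x : G), (y : G)⁆ := by
      rw [commutatorElement_def, commutatorElement_def]
      push_cast
      rfl
    rw [h1]
    exact hKKN _ x.2 _ y.2)
  set σK := rAut σ K hKσ with hσKdef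
  set τK := rAut τ K hKτ with hτKdef
  have hσKN : ∀ x ∈ N', σK x ∈ N' := by
    intro x hx
    rw [hmemN'] at hx ⊢
    rw [hσKdef, rAut_apply]
    exact hNmem σ hNσ _ hx
  have hσKN' : ∀ x ∈ N', σK⁻¹ x ∈ N' := by
    intro x hx
    rw [hmemN'] at hx ⊢
    rw [hσKdef, rAut_inv_apply]
    exact hNmem' σ hNσ _ hx
  have hτKN : ∀ x ∈ N', τK x ∈ N' := by
    intro x hx
    rw [hmemN'] at hx ⊢
    rw [hτKdef, rAut_apply]
    exact hNmem τ hNτ _ hx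
  have hτKN' : ∀ x ∈ N', τK⁻¹ x ∈ N' := by
    intro x hx
    rw [hmemN'] at hx ⊢
    rw [hτKdef, rAut_inv_apply]
    exact hNmem' τ hNτ _ hx
  set f := qAut N' σK hσKN hσKN' with hfdef
  set g := qAut N' τK hτKN hτKN' with hgdef
  have hfmk : ∀ x : ↥K, f (QuotientGroup.mk x) = QuotientGroup.mk (σK x) := fun x => rfl
  have hgmk : ∀ x : ↥K, g (QuotientGroup.mk x) = QuotientGroup.mk (τK x) := fun x => rfl
  -- pointwise description of f * g^n on the quotient
  have hgnmk : ∀ (n : ℕ) (x : ↥K), (g ^ n) (QuotientGroup.mk x) = QuotientGroup.mk ((τK ^ n) x) :=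
    fun n => liftPowMk N' g τK hgmk n
  have hfgnmk : ∀ (n : ℕ) (x : ↥K),
      (f * g ^ n) (QuotientGroup.mk x) = QuotientGroup.mk ((σK * τK ^ n) x) := by
    intro n x
    rw [MulAut.mul_apply, hgnmk, hfmk, MulAut.mul_apply]
  -- coercion description of σK * τK^n
  have hcoe : ∀ (n : ℕ) (x : ↥K), ((( σK * τK ^ n) x : ↥K) : G) = (σ * τ ^ n) ↑x := by
    intro n x
    rw [MulAut.mul_apply, MulAut.mul_apply, hσKdef, rAut_apply]
    congr 1
    exact coePow K τK τ (fun y => by rw [hτKdef, rAut_apply]) n x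
  -- (f * g^n)^q = 1
  have hfgnq : ∀ n : ℕ, (f * g ^ n) ^ q = 1 := by
    intro n
    apply MulEquiv.ext
    intro c
    refine QuotientGroup.induction_on c (fun x => ?_)
    rw [liftPowMk N' (f * g ^ n) (σK * τK ^ n) (hfgnmk n) q x]
    have h1 : ((σK * τK ^ n) ^ q) x = x := by
      apply Subtype.ext
      rw [coePow K (σK * τK ^ n) (σ * τ ^ n) (hcoe n) q x, hpow n]
      rfl
    rw [h1]
    rfl
  have hgq : g ^ q = 1 := by
    apply MulEquiv.ext
    intro c
    refine QuotientGroup.induction_on c (fun x => ?_)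
    rw [hgnmk q x]
    have h1 : (τK ^ q) x = x := by
      apply Subtype.ext
      rw [coePow K τK τ (fun y => by rw [hτKdef, rAut_apply]) q x, hτq]
      rfl
    rw [h1]
    rfl
  have hfq : f ^ q = 1 := by
    have := hfgnq 0
    simpa using this
  have hfg : f * g = g * f := by
    apply MulEquiv.ext
    intro c
    refine QuotientGroup.induction_on c (fun x => ?_)
    rw [MulAut.mul_apply, MulAut.mul_apply, hfmk, hgmk, hgmk, hfmk]
    congr 1
    apply Subtype.ext
    rw [hσKdef, hτKdef, rAut_apply, rAut_apply, rAut_apply, rAut_apply]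
    exact hστ ↑x x.2
  -- the key lifting step
  have lift : ∀ (δ : MulAut G) (ΔK : MulAut ↥K) (Δ : MulAut (↥K ⧸ N')),
      (∀ x : ↥K, Δ (QuotientGroup.mk x) = QuotientGroup.mk (ΔK x)) →
      (∀ x : ↥K, ((ΔK x : ↥K) : G) = δ ↑x) →
      (∀ x ∈ N, δ x ∈ N) → δ ^ q = 1 →
      ∀ (c : ↥K ⧸ N'), Δ c = c →
      ∃ w : ↥K, δ ↑w = ↑w ∧ (QuotientGroup.mk w : ↥K ⧸ N') = c := by
    intro δ ΔK Δ hΔmk hΔcoe hδN hδq c hc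
    obtain ⟨u, hu⟩ := QuotientGroup.mk_surjective c
    have h1 : (QuotientGroup.mk (ΔK u) : ↥K ⧸ N') = QuotientGroup.mk u := by
      rw [← hΔmk, hu, hc]
    have h2 : (ΔK u)⁻¹ * u ∈ N' := QuotientGroup.eq.mp h1
    have h3 : (↑u)⁻¹ * δ ↑u ∈ N := by
      have h4 : (((ΔK u)⁻¹ * u : ↥K) : G) ∈ N := (hmemN' _).mp h2
      have h5 : (((ΔK u)⁻¹ * u : ↥K) : G) = (δ ↑u)⁻¹ * ↑u := by
        push_cast
        rw [hΔcoe]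
      rw [h5] at h4
      have := inv_mem h4
      simpa using this
    obtain ⟨w, hw1, hw2⟩ := myCL hq δ hδq N hδN hNq ↑u h3
    have hwK : w ∈ K := by
      have : w = ↑u * ((↑u)⁻¹ * w) := by group
      rw [this]
      exact mul_mem u.2 (hNK hw2)
    refine ⟨⟨w, hwK⟩, hw1, ?_⟩
    rw [← hu]
    exact (QuotientGroup.eq.mpr ((hmemN' _).mpr (by simpa using hw2))).symm
  -- apply the norm identity
  set zK : ↥K := ⟨z, hz⟩ with hzKdef
  have hAL := myAL (q := q) f g hfg hfq hgq (QuotientGroup.mk zK)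
  -- lift each factor
  have hliftj : ∀ j : ZMod q, ∃ w : ↥K, (σ * τ ^ (j.val)) ↑w = ↑w ∧
      (QuotientGroup.mk w : ↥K ⧸ N') = myNrm q (f * g ^ (j.val)) (QuotientGroup.mk zK) := by
    intro j
    exact lift (σ * τ ^ j.val) (σK * τK ^ j.val) (f * g ^ j.val) (hfgnmk j.val) (hcoe j.val)
      (fun x hx => by
        rw [MulAut.mul_apply]
        exact hNmem σ hNσ _ ((fun m => Nat.rec (motive := fun m => ∀ y ∈ N, (τ ^ m) y ∈ N)
          (fun y hy => by simpa using hy)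
          (fun m ih y hy => by
            rw [pow_succ, MulAut.mul_apply]
            exact ih _ (hNmem τ hNτ _ hy)) m) j.val x hx))
      (hpow j.val) _ (myNrm_fixed (f * g ^ j.val) (hfgnq j.val) (QuotientGroup.mk zK))
  choose wvec hwvec1 hwvec2 using hliftj
  obtain ⟨wg, hwg1, hwg2⟩ := lift τ τK g hgmk (fun y => by rw [hτKdef, rAut_apply])
    (hNmem τ hNτ) hτq _ (myNrm_fixed g hgq (QuotientGroup.mk zK))
  obtain ⟨wW, hwW1, hwW2⟩ := lift σ σK f hfmk (fun y => by rw [hσKdef, rAut_apply])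
    (hNmem σ hNσ) hσq _ (myW_fixed_left f g hfq (QuotientGroup.mk zK))
  -- turn the big product over ZMod q into a list
  have mkListProd : ∀ (s : Finset (ZMod q)),
      ∃ l : List ↥K, (∀ w ∈ l, ∃ j ∈ s, w = wvec j) ∧
        (QuotientGroup.mk l.prod : ↥K ⧸ N') = ∏ j ∈ s, (QuotientGroup.mk (wvec j) : ↥K ⧸ N') := by
    classical
    intro s
    induction s using Finset.induction_on with
    | empty => exact ⟨[], by simp, by simp; rfl⟩
    | @insert a s ha ih =>
      obtain ⟨l, hl1, hl2⟩ := ih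
      refine ⟨wvec a :: l, ?_, ?_⟩
      · intro w hw
        rcases List.mem_cons.mp hw with h | h
        · exact ⟨a, Finset.mem_insert_self a s, h⟩
        · obtain ⟨j, hj, hje⟩ := hl1 w h
          exact ⟨j, Finset.mem_insert_of_mem hj, hje⟩
      · rw [List.prod_cons, Finset.prod_insert ha, ← hl2]
        rfl
  obtain ⟨lK, hlK1, hlK2⟩ := mkListProd Finset.univ
  -- assemble
  set U : ↥K := lK.prod * wg * wW⁻¹ with hUdef
  have hmkU : (QuotientGroup.mk U : ↥K ⧸ N') = (QuotientGroup.mk zK) ^ q := by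
    have h1 : (QuotientGroup.mk U : ↥K ⧸ N')
        = (QuotientGroup.mk lK.prod : ↥K ⧸ N') * QuotientGroup.mk wg
          * (QuotientGroup.mk wW)⁻¹ := by
      rw [hUdef, QuotientGroup.mk_mul, QuotientGroup.mk_mul, QuotientGroup.mk_inv]
      rfl
    rw [h1, hlK2, hwg2, hwW2, Finset.prod_congr rfl (fun j _ => hwvec2 j)]
    exact hAL.symm
  have hveq : U⁻¹ * zK ^ q ∈ N' := by
    apply QuotientGroup.eq.mp
    rw [hmkU, QuotientGroup.mk_pow]
  -- final list in G
  refine ⟨lK.map (fun w : ↥K => (w : G)) ++ [(↑wg : G), (↑wW : G)⁻¹], ?_, ?_⟩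
  · intro w hw
    rcases List.mem_append.mp hw with h | h
    · obtain ⟨w', hw', rfl⟩ := List.mem_map.mp h
      obtain ⟨j, _, rfl⟩ := hlK1 w' hw'
      exact ⟨(wvec j).2, Or.inr (Or.inr ⟨(j : ZMod q).val, ZMod.val_lt j, hwvec1 j⟩)⟩
    · rcases List.mem_cons.mp h with h | h
      · subst h
        exact ⟨wg.2, Or.inr (Or.inl hwg1)⟩
      · have h2 : w = (↑wW : G)⁻¹ := by simpa using h
        subst h2
        refine ⟨inv_mem wW.2, Or.inl ?_⟩
        rw [map_inv, hwW1]
  · refine ⟨↑(U⁻¹ * zK ^ q), (hmemN' _).mp hveq, ?_⟩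
    have hlp : ((lK.prod : ↥K) : G) = (lK.map (fun w : ↥K => (w : G))).prod := by
      rw [← Subgroup.coe_subtype]
      exact map_list_prod K.subtype lK
    have hUcoe : ((U : ↥K) : G) = (lK.map (fun w : ↥K => (w : G))).prod * ↑wg * (↑wW : G)⁻¹ := by
      rw [hUdef]
      push_cast
      rfl
    have hlist : ((lK.map (fun w : ↥K => (w : G)) ++ [(↑wg : G), (↑wW : G)⁻¹]).prod)
        = (lK.map (fun w : ↥K => (w : G))).prod * ↑wg * (↑wW : G)⁻¹ := by
      rw [List.prod_append, List.prod_cons, List.prod_singleton, mul_assoc]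
    rw [hlist, ← hUcoe]
    have h3 : zK ^ q = U * (U⁻¹ * zK ^ q) := by group
    calc z ^ q = ((zK ^ q : ↥K) : G) := by rw [hzKdef]; push_cast; rfl
      _ = ((U * (U⁻¹ * zK ^ q) : ↥K) : G) := by rw [← h3]
      _ = _ := by push_cast; rfl

end DEC

section CardSq

lemma cardSqComm {q : ℕ} (hq : q.Prime) {A : Type*} [Group A] [Finite A]
    (hA : Nat.card A = q ^ 2) (u v : A) : u * v = v * u := by
  haveI := Fact.mk hq
  have hpg : IsPGroup q A := IsPGroup.of_card hA
  haveI : Nontrivial A := (Finite.one_lt_card_iff_nontrivial).mp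
    (by rw [hA]; exact Nat.one_lt_pow (by norm_num) hq.one_lt)
  haveI := hpg.center_nontrivial
  have hdvd : Nat.card (Subgroup.center A) ∣ q ^ 2 :=
    ⟨(Subgroup.center A).index, hA ▸ (Subgroup.card_mul_index (Subgroup.center A)).symm⟩
  obtain ⟨k, hk, hcard⟩ := (Nat.dvd_prime_pow hq).mp hdvd
  have hk0 : k ≠ 0 := by
    rintro rfl
    rw [pow_zero] at hcard
    have := (Finite.one_lt_card_iff_nontrivial (α := ↥(Subgroup.center A))).mpr inferInstance
    omega
  have hidx : Nat.card (Subgroup.center A) * Nat.card (A ⧸ Subgroup.center A) = q ^ 2 := by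
    rw [← Subgroup.index_eq_card, Subgroup.card_mul_index, hA]
  haveI : IsCyclic (A ⧸ Subgroup.center A) := by
    interval_cases k
    · exact absurd rfl hk0
    · refine isCyclic_of_prime_card (p := q) ?_
      rw [hcard, pow_one] at hidx
      have h2 : q * Nat.card (A ⧸ Subgroup.center A) = q * q := by
        rw [hidx, pow_two]
      exact Nat.eq_of_mul_eq_mul_left hq.pos h2
    · have h1 : Nat.card (A ⧸ Subgroup.center A) = 1 := by
        rw [hcard] at hidx
        have h2 : q ^ 2 * Nat.card (A ⧸ Subgroup.center A) = q ^ 2 * 1 := by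
          rw [hidx, mul_one]
        exact Nat.eq_of_mul_eq_mul_left (pow_pos hq.pos 2) h2
      haveI : Subsingleton (A ⧸ Subgroup.center A) := (Nat.card_eq_one_iff_unique.mp h1).1
      infer_instance
  exact commutative_of_cyclic_center_quotient (QuotientGroup.mk' _)
    (le_of_eq (QuotientGroup.ker_mk' _)) u v

end CardSq

/-- With `P` abelian: `[P, C_H(B)] ≤ ∏_{a ∈ A#} [C_P(a), C_H(a)]`. -/
theorem stmt7 {A G : Type*} [Group A] [Group G] [Finite A] [Finite G] {q p : ℕ}
    (hq : q.Prime) (hp : p.Prime)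
    (hcardA : Nat.card A = q ^ 3) (hexp : Monoid.exponent A = q)
    (hcop : Nat.Coprime (Nat.card G) q)
    (B : Subgroup A) (hBZ : B ≤ Subgroup.center A) (hB : Nat.card B = q)
    (φ : A →* MulAut G) (P H : Subgroup G) [P.Normal]
    (hPinv : ∀ a : A, P.map (φ a).toMonoidHom = P)
    (hHinv : ∀ a : A, H.map (φ a).toMonoidHom = H)
    (hPH : P ⊔ H = ⊤) (hPp : IsPGroup p P)
    (hPab : ∀ x ∈ P, ∀ y ∈ P, x * y = y * x)
    (hHnil : Group.IsNilpotent H) (hHp' : Nat.Coprime (Nat.card H) p) :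
    ⁅P, H ⊓ ⨅ b ∈ B, autFixed (φ b)⁆ ≤
      ⨆ a ∈ {a : A | a ≠ 1}, ⁅P ⊓ autFixed (φ a), H ⊓ autFixed (φ a)⁆ := by
  haveI := Fact.mk hq
  set R : Subgroup G := ⨆ a ∈ {a : A | a ≠ 1}, ⁅P ⊓ autFixed (φ a), H ⊓ autFixed (φ a)⁆
    with hRdef
  set H₀ : Subgroup G := H ⊓ ⨅ b ∈ B, autFixed (φ b) with hH₀def
  -- basic arithmetic facts
  have hq1A : ∀ a : A, a ^ q = 1 := fun a => by rw [← hexp]; exact Monoid.pow_exponent_eq_one a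
  have hqN : ∀ N' : Subgroup G, ¬ q ∣ Nat.card N' := by
    intro N' hdvd
    have h1 : Nat.card N' ∣ Nat.card G := ⟨N'.index, (N'.card_mul_index).symm⟩
    have h2 : q ∣ Nat.card G := hdvd.trans h1
    have h3 : q ∣ Nat.gcd (Nat.card G) q := Nat.dvd_gcd h2 dvd_rfl
    rw [hcop] at h3
    have := Nat.dvd_one.mp h3
    have := hq.one_lt
    omega
  have hordco : ∀ g : G, Nat.Coprime q (orderOf g) :=
    fun g => (Nat.Coprime.symm hcop).coprime_dvd_right (orderOf_dvd_natCard g)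
  -- commutators with elements of P land in P
  have hcommP : ∀ x ∈ P, ∀ h' : G, ⁅x, h'⁆ ∈ P := by
    intro x hx h'
    have h1 : ⁅x, h'⁆ = x * (h' * x⁻¹ * h'⁻¹) := by rw [commutatorElement_def]; group
    rw [h1]
    exact mul_mem hx (‹P.Normal›.conj_mem x⁻¹ (inv_mem hx) h')
  -- membership into R
  have hR : ∀ d : A, d ≠ 1 → ∀ x ∈ P, φ d x = x → ∀ h' ∈ H, φ d h' = h' → ⁅x, h'⁆ ∈ R := by
    intro d hd x hx hfx h' hh' hfh
    have h1 : ⁅x, h'⁆ ∈ ⁅P ⊓ autFixed (φ d), H ⊓ autFixed (φ d)⁆ :=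
      Subgroup.commutator_mem_commutator (Subgroup.mem_inf.mpr ⟨hx, hfx⟩)
        (Subgroup.mem_inf.mpr ⟨hh', hfh⟩)
    exact le_iSup₂ (f := fun (a : A) (_ : a ∈ {a : A | a ≠ 1}) =>
      ⁅P ⊓ autFixed (φ a), H ⊓ autFixed (φ a)⁆) d hd h1
  -- commutator identities
  have hpsi_mul : ∀ x ∈ P, ∀ y ∈ P, ∀ h' : G, ⁅x * y, h'⁆ = ⁅y, h'⁆ * ⁅x, h'⁆ := by
    intro x hx y hy h'
    have h1 : ⁅x * y, h'⁆ = x * ⁅y, h'⁆ * x⁻¹ * ⁅x, h'⁆ := by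
      simp only [commutatorElement_def]; group
    have h2 : x * ⁅y, h'⁆ = ⁅y, h'⁆ * x := hPab x hx _ (hcommP y hy h')
    rw [h1, h2, mul_assoc ⁅y, h'⁆ x x⁻¹, mul_inv_cancel, mul_one]
  have hpsi_pow : ∀ x ∈ P, ∀ h' : G, ∀ n : ℕ, ⁅x ^ n, h'⁆ = ⁅x, h'⁆ ^ n := by
    intro x hx h' n
    induction n with
    | zero => simp
    | succ n ih =>
      rw [pow_succ, hpsi_mul (x ^ n) (pow_mem hx n) x hx h', ih, ← pow_succ']
  have hpsi_list : ∀ l : List G, (∀ w ∈ l, w ∈ P) → ∀ h' : G,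
      ⁅l.prod, h'⁆ = (l.map (fun w => ⁅w, h'⁆)).prod := by
    intro l
    induction l with
    | nil => intro _ h'; simp
    | cons w l ih =>
      intro hmem h'
      have hwP : w ∈ P := hmem w List.mem_cons_self
      have hlP : ∀ u ∈ l, u ∈ P := fun u hu => hmem u (List.mem_cons_of_mem w hu)
      have hlprodP : l.prod ∈ P := Subgroup.list_prod_mem P hlP
      rw [List.prod_cons, hpsi_mul w hwP l.prod hlprodP h', List.map_cons, List.prod_cons,
        ← ih hlP h']
      exact hPab _ (hcommP _ hlprodP h') _ (hcommP w hwP h')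
  -- the subgroup S
  set S : Subgroup G :=
    { carrier := {h' | h' ∈ H ∧ ∀ x ∈ P, ⁅x, h'⁆ ∈ R}
      one_mem' := ⟨one_mem H, fun x _ => by rw [commutatorElement_one_right]; exact one_mem R⟩
      mul_mem' := by
        rintro h₁ h₂ ⟨h₁H, h₁R⟩ ⟨h₂H, h₂R⟩
        refine ⟨mul_mem h₁H h₂H, fun x hx => ?_⟩
        have id2 : ⁅x, h₁ * h₂⁆ = ⁅x, h₁⁆ * (h₁ * ⁅x, h₂⁆ * h₁⁻¹) := by
          simp only [commutatorElement_def]; group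
        have id3 : h₁ * ⁅x, h₂⁆ * h₁⁻¹ = ⁅x, h₂⁆ * ⁅⁅x, h₂⁆⁻¹, h₁⁆ := by
          simp only [commutatorElement_def]; group
        rw [id2, id3]
        exact mul_mem (h₁R x hx) (mul_mem (h₂R x hx)
          (h₁R _ (inv_mem (hcommP x hx h₂))))
      inv_mem' := by
        rintro h' ⟨h'H, h'R⟩
        refine ⟨inv_mem h'H, fun x hx => ?_⟩
        have id4 : ⁅x, h'⁻¹⁆ = ⁅h'⁻¹ * x * h', h'⁆⁻¹ := by
          simp only [commutatorElement_def]; group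
        rw [id4]
        refine inv_mem (h'R _ ?_)
        have := ‹P.Normal›.conj_mem x hx h'⁻¹
        rwa [inv_inv] at this }
    with hSdef
  -- choice of b₀, a₁, a₂
  obtain ⟨b₀, hb₀B, hb₀1⟩ : ∃ b₀ : A, b₀ ∈ B ∧ b₀ ≠ 1 := by
    haveI : Nontrivial ↥B := (Finite.one_lt_card_iff_nontrivial).mp (by rw [hB]; exact hq.one_lt)
    obtain ⟨b, hb⟩ := exists_ne (1 : ↥B)
    exact ⟨↑b, b.2, fun h => hb (Subtype.ext h)⟩
  obtain ⟨a₁, ha₁⟩ : ∃ a : A, a ∉ B := by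
    by_contra hcon
    push_neg at hcon
    have h1 : B = ⊤ := (Subgroup.eq_top_iff' B).mpr hcon
    have h2 : Nat.card B = Nat.card A := by rw [h1]; exact Subgroup.card_top
    rw [hB, hcardA] at h2
    have h5 : q ^ 1 < q ^ 3 := Nat.pow_lt_pow_right hq.one_lt (by norm_num)
    rw [pow_one] at h5
    omega
  have hpowinj : ∀ n : ℕ, 0 < n → n < q → ∀ x y : A, x ^ n = y ^ n → x = y := by
    intro n hn0 hnq x y hxy
    have hunit : (n : ZMod q) ≠ 0 := by
      rw [Ne, ZMod.natCast_eq_zero_iff]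
      exact Nat.not_dvd_of_pos_of_lt hn0 hnq
    set m := ((n : ZMod q)⁻¹).val with hm
    have hmod : (n * m) % q = 1 := by
      have h1 : ((n * m : ℕ) : ZMod q) = 1 := by
        push_cast
        rw [hm, ZMod.natCast_rightInverse _, mul_inv_cancel₀ hunit]
      have h2 : ((n * m : ℕ) : ZMod q) = ((1 : ℕ) : ZMod q) := by rw [h1]; norm_num
      have h3 := (ZMod.natCast_eq_natCast_iff _ _ _).mp h2
      have h4 : 1 % q = 1 := Nat.mod_eq_of_lt hq.one_lt
      unfold Nat.ModEq at h3
      omega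
    have hx : x = (x ^ n) ^ m := by
      rw [← pow_mul, myPowMod (hq1A x) (n * m), hmod, pow_one]
    rw [hx, hxy, ← pow_mul, myPowMod (hq1A y) (n * m), hmod, pow_one]
  obtain ⟨a₂, ha₂B, ha₂⟩ : ∃ a₂ : A, a₂ ∉ B ∧ ∀ n : ℕ, n < q → a₁ * a₂ ^ n ∉ B := by
    by_contra hcon
    push_neg at hcon
    classical
    haveI : Fintype A := Fintype.ofFinite A
    have hcover : (Finset.univ : Finset A) ⊆ Finset.univ.filter (· ∈ B)
        ∪ (Finset.range q).biUnion (fun n => Finset.univ.filter (fun x => a₁ * x ^ n ∈ B)) := by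
      intro x _
      by_cases hx : x ∈ B
      · exact Finset.mem_union_left _ (Finset.mem_filter.mpr ⟨Finset.mem_univ _, hx⟩)
      · obtain ⟨n, hn, hmem⟩ := hcon x hx
        exact Finset.mem_union_right _ (Finset.mem_biUnion.mpr ⟨n, Finset.mem_range.mpr hn,
          Finset.mem_filter.mpr ⟨Finset.mem_univ _, hmem⟩⟩)
    have hcardB : (Finset.univ.filter (· ∈ B)).card = q := by
      rw [← hB, Nat.card_eq_fintype_card, Fintype.card_subtype]
    have hbound : ∀ n ∈ Finset.range q,
        (Finset.univ.filter (fun x : A => a₁ * x ^ n ∈ B)).card ≤ q := by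
      intro n hn
      rcases Nat.eq_zero_or_pos n with rfl | hn0
      · have h1 : Finset.univ.filter (fun x : A => a₁ * x ^ 0 ∈ B) = ∅ := by
          apply Finset.filter_eq_empty_iff.mpr
          intro x _
          simpa using ha₁
        rw [h1]
        simp [hq.pos.le]
      · rw [← hcardB]
        apply Finset.card_le_card_of_injOn (fun x => a₁ * x ^ n)
        · intro x hx
          exact Finset.mem_filter.mpr ⟨Finset.mem_univ _, (Finset.mem_filter.mp hx).2⟩
        · intro x _ y _ hxy
          exact hpowinj n hn0 (Finset.mem_range.mp hn) x y (mul_left_cancel hxy)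
    have hA3 : q ^ 3 ≤ q + q * q := by
      calc q ^ 3 = Fintype.card A := by rw [← Nat.card_eq_fintype_card, hcardA]
        _ = (Finset.univ : Finset A).card := (Finset.card_univ).symm
        _ ≤ (Finset.univ.filter (· ∈ B)
            ∪ (Finset.range q).biUnion
              (fun n => Finset.univ.filter (fun x : A => a₁ * x ^ n ∈ B))).card :=
          Finset.card_le_card hcover
        _ ≤ (Finset.univ.filter (· ∈ B)).card
            + ((Finset.range q).biUnion
              (fun n => Finset.univ.filter (fun x : A => a₁ * x ^ n ∈ B))).card :=
          Finset.card_union_le _ _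
        _ ≤ q + ∑ n ∈ Finset.range q,
              (Finset.univ.filter (fun x : A => a₁ * x ^ n ∈ B)).card := by
          rw [hcardB]
          exact add_le_add le_rfl (Finset.card_biUnion_le)
        _ ≤ q + ∑ _n ∈ Finset.range q, q := by
          exact add_le_add le_rfl (Finset.sum_le_sum hbound)
        _ = q + q * q := by rw [Finset.sum_const, Finset.card_range, smul_eq_mul]
    have h2 : 2 ≤ q := hq.two_le
    have h3 : q + q * q < q ^ 3 := by
      have he : q ^ 3 = q * (q * q) := by ring
      rw [he]
      have h4 : q + q * q < 2 * (q * q) := by nlinarith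
      calc q + q * q < 2 * (q * q) := h4
        _ ≤ q * (q * q) := Nat.mul_le_mul_right _ h2
    omega
  -- the commutator of A lies in B
  have hcommB : ∀ u v : A, (v * u)⁻¹ * (u * v) ∈ B := by
    by_cases hc : ∀ u v : A, u * v = v * u
    · intro u v
      rw [hc u v, inv_mul_cancel]
      exact one_mem B
    · push_neg at hc
      obtain ⟨u₀, v₀, huv₀⟩ := hc
      have hpg : IsPGroup q A := IsPGroup.of_card hcardA
      haveI : Nontrivial A := (Finite.one_lt_card_iff_nontrivial).mp
        (by rw [hcardA]; exact Nat.one_lt_pow (by norm_num) hq.one_lt)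
      haveI := hpg.center_nontrivial
      have hdvd : Nat.card (Subgroup.center A) ∣ q ^ 3 :=
        ⟨(Subgroup.center A).index, hcardA ▸ (Subgroup.card_mul_index _).symm⟩
      obtain ⟨k, hk, hcard⟩ := (Nat.dvd_prime_pow hq).mp hdvd
      have hidx : Nat.card (Subgroup.center A) * Nat.card (A ⧸ Subgroup.center A) = q ^ 3 := by
        rw [← Subgroup.index_eq_card, Subgroup.card_mul_index, hcardA]
      have hk0 : k ≠ 0 := by
        rintro rfl
        rw [pow_zero] at hcard
        have := (Finite.one_lt_card_iff_nontrivial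
          (α := ↥(Subgroup.center A))).mpr inferInstance
        omega
      have hknot : k = 1 := by
        by_contra hk1
        have hcyc : IsCyclic (A ⧸ Subgroup.center A) := by
          interval_cases k
          · exact absurd rfl hk0
          · exact absurd rfl hk1
          · refine isCyclic_of_prime_card (p := q) ?_
            rw [hcard] at hidx
            have h2 : q ^ 2 * Nat.card (A ⧸ Subgroup.center A) = q ^ 2 * q := by
              rw [hidx, pow_succ]
            exact Nat.eq_of_mul_eq_mul_left (pow_pos hq.pos 2) h2
          · have h1 : Nat.card (A ⧸ Subgroup.center A) = 1 := by
              rw [hcard] at hidx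
              have h2 : q ^ 3 * Nat.card (A ⧸ Subgroup.center A) = q ^ 3 * 1 := by
                rw [hidx, mul_one]
              exact Nat.eq_of_mul_eq_mul_left (pow_pos hq.pos 3) h2
            haveI : Subsingleton (A ⧸ Subgroup.center A) := (Nat.card_eq_one_iff_unique.mp h1).1
            infer_instance
        exact absurd (commutative_of_cyclic_center_quotient (QuotientGroup.mk' _)
          (le_of_eq (QuotientGroup.ker_mk' _)) u₀ v₀) huv₀
      -- B = center A
      have hBC : B = Subgroup.center A := by
        have hsub : (B : Set A) ⊆ (Subgroup.center A : Set A) := hBZ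
        have hcards : (Subgroup.center A : Set A).ncard ≤ (B : Set A).ncard := by
          rw [← Nat.card_coe_set_eq, ← Nat.card_coe_set_eq]
          show Nat.card (Subgroup.center A) ≤ Nat.card B
          rw [hB, hcard, hknot, pow_one]
        exact SetLike.coe_injective (Set.eq_of_subset_of_ncard_le hsub hcards)
      have hq2 : Nat.card (A ⧸ Subgroup.center A) = q ^ 2 := by
        rw [hcard, hknot, pow_one] at hidx
        have h2 : q * Nat.card (A ⧸ Subgroup.center A) = q * q ^ 2 := by
          rw [hidx]; ring
        exact Nat.eq_of_mul_eq_mul_left hq.pos h2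
      intro u v
      have hcm := cardSqComm hq hq2 (QuotientGroup.mk u) (QuotientGroup.mk v)
      have h1 : (QuotientGroup.mk (v * u) : A ⧸ Subgroup.center A) = QuotientGroup.mk (u * v) := by
        rw [QuotientGroup.mk_mul, QuotientGroup.mk_mul, ← hcm]
      have h2 := QuotientGroup.eq.mp h1
      rwa [hBC]
  -- the key lemma: elements of H fixed by B and some d ∉ B lie in S
  have keyP : ∀ d : A, d ∉ B → ∀ h' : G, h' ∈ H → φ d h' = h' →
      (∀ b ∈ B, φ b h' = h') → h' ∈ S := by
    intro d hdB h' hh'H hdh' hBh'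
    refine ⟨hh'H, fun x hx => ?_⟩
    obtain ⟨l, hl, v, hv, hzq⟩ := myDEC hq P ⊥ bot_le
      (fun x' hx' y' hy' => by
        rw [Subgroup.mem_bot]
        exact commutatorElement_eq_one_iff_commute.mpr (hPab x' hx' y' hy'))
      (φ d) (φ b₀) (hPinv d) (hPinv b₀) (Subgroup.map_bot _) (Subgroup.map_bot _)
      (fun x' _ => by
        have hc : d * b₀ = b₀ * d := (Subgroup.mem_center_iff.mp (hBZ hb₀B) d)
        rw [← MulAut.mul_apply, ← map_mul, ← MulAut.mul_apply, ← map_mul, hc])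
      (fun m => by rw [← map_pow φ b₀ m, ← map_mul, ← map_pow, hq1A, map_one])
      (by rw [← map_pow, hq1A, map_one])
      (hqN _) x hx
    rw [Subgroup.mem_bot] at hv
    subst hv
    rw [mul_one] at hzq
    have hcq : ⁅x, h'⁆ ^ q ∈ R := by
      rw [← hpsi_pow x hx h' q, hzq, hpsi_list l (fun w hw => (hl w hw).1) h']
      apply Subgroup.list_prod_mem
      intro c hc
      obtain ⟨w, hw, rfl⟩ := List.mem_map.mp hc
      obtain ⟨hwP, hfix⟩ := hl w hw
      rcases hfix with hfw | hfw | ⟨m, hm, hfw⟩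
      · exact hR d (fun h1 => hdB (h1 ▸ one_mem B)) w hwP hfw h' hh'H hdh'
      · exact hR b₀ hb₀1 w hwP hfw h' hh'H (hBh' b₀ hb₀B)
      · refine hR (d * b₀ ^ m) ?_ w hwP ?_ h' hh'H ?_
        · intro h1
          apply hdB
          have h2 : d = (b₀ ^ m)⁻¹ := by
            rw [eq_inv_iff_mul_eq_one]; exact h1
          rw [h2]
          exact inv_mem (pow_mem hb₀B m)
        · rw [map_mul, map_pow]
          exact hfw
        · rw [map_mul, map_pow, MulAut.mul_apply]
          have hpw : ∀ k : ℕ, ((φ b₀) ^ k) h' = h' := by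
            intro k
            induction k with
            | zero => simp
            | succ n ih =>
              rw [pow_succ, MulAut.mul_apply, hBh' b₀ hb₀B, ih]
          rw [hpw m]
          exact hdh'
    exact myMemOfPow (hordco _) hcq
  -- invariance of H₀
  have hH₀mem : ∀ x : G, x ∈ H₀ ↔ x ∈ H ∧ ∀ b ∈ B, φ b x = x := by
    intro x
    rw [hH₀def, Subgroup.mem_inf]
    simp only [Subgroup.mem_iInf]
    rfl
  have hHmemiff : ∀ (a : A) (x : G), φ a x ∈ H ↔ x ∈ H := by
    have haux : ∀ (a : A) (x : G), x ∈ H → φ a x ∈ H := by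
      intro a x hx
      rw [← hHinv a]
      exact ⟨x, hx, rfl⟩
    intro a x
    refine ⟨fun hx => ?_, haux a x⟩
    have h1 : φ a⁻¹ (φ a x) = x := by
      rw [← MulAut.mul_apply, ← map_mul, inv_mul_cancel, map_one, MulAut.one_apply]
    rw [← h1]
    exact haux a⁻¹ _ hx
  have hFixiff : ∀ (a b : A), b ∈ B → ∀ x : G, (φ b (φ a x) = φ a x ↔ φ b x = x) := by
    intro a b hb x
    have hc : a * b = b * a := Subgroup.mem_center_iff.mp (hBZ hb) a
    rw [← MulAut.mul_apply, ← map_mul, ← hc, map_mul, MulAut.mul_apply]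
    exact ⟨fun h => (φ a).injective h, fun h => by rw [h]⟩
  have hφsymm : ∀ (a : A) (x : G), (φ a).symm x = φ a⁻¹ x := by
    intro a x
    rw [map_inv, MulAut.inv_def]
  have hH₀inv : ∀ a : A, H₀.map (φ a).toMonoidHom = H₀ := by
    intro a
    ext x
    rw [Subgroup.mem_map_equiv, hH₀mem, hH₀mem, hφsymm]
    constructor
    · rintro ⟨h1, h2⟩
      exact ⟨(hHmemiff a⁻¹ x).mp h1, fun b hb => (hFixiff a⁻¹ b hb x).mp (h2 b hb)⟩
    · rintro ⟨h1, h2⟩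
      exact ⟨(hHmemiff a⁻¹ x).mpr h1, fun b hb => (hFixiff a⁻¹ b hb x).mpr (h2 b hb)⟩
  -- the lower central series chain
  have hH₀nil : ∃ m, Subgroup.lowerCentralSeries (⊤ : Subgroup ↥H₀) m = ⊥ := by
    haveI : Group.IsNilpotent ↥H := hHnil
    have hle : H₀ ≤ H := hH₀def ▸ inf_le_left
    have e := Subgroup.subgroupOfEquivOfLe hle
    haveI : Group.IsNilpotent ↥H₀ := nilpotent_of_surjective e.toMonoidHom e.surjective
    exact nilpotent_iff_lowerCentralSeries.mp this
  set Kc : ℕ → Subgroup G := fun n => (Subgroup.lowerCentralSeries (⊤ : Subgroup ↥H₀) n).map H₀.subtype with hKcdef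
  have hKc0 : Kc 0 = H₀ := by
    rw [hKcdef]
    show (Subgroup.lowerCentralSeries (⊤ : Subgroup ↥H₀) 0).map H₀.subtype = H₀
    rw [lowerCentralSeries_zero, ← MonoidHom.range_eq_map, Subgroup.range_subtype]
  have hKcsucc : ∀ n, Kc (n + 1) = ⁅Kc n, H₀⁆ := by
    intro n
    rw [hKcdef]
    show (Subgroup.lowerCentralSeries (⊤ : Subgroup ↥H₀) (n + 1)).map H₀.subtype = _
    have hsucc : Subgroup.lowerCentralSeries (⊤ : Subgroup ↥H₀) (n + 1) = ⁅Subgroup.lowerCentralSeries (⊤ : Subgroup ↥H₀) n, ⊤⁆ := rfl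
    rw [hsucc, Subgroup.map_commutator, ← MonoidHom.range_eq_map, Subgroup.range_subtype]
  have hKcle : ∀ n, Kc n ≤ H₀ := fun n => Subgroup.map_subtype_le _
  have hKcmono : ∀ n, Kc (n + 1) ≤ Kc n :=
    fun n => Subgroup.map_mono (lowerCentralSeries_antitone _ (Nat.le_succ n))
  have hKcinv : ∀ (n : ℕ) (a : A), (Kc n).map (φ a).toMonoidHom = Kc n := by
    intro n
    induction n with
    | zero => intro a; rw [hKc0]; exact hH₀inv a
    | succ n ih => intro a; rw [hKcsucc n, Subgroup.map_commutator, ih a, hH₀inv a]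
  have hKcB : ∀ n, ∀ x ∈ Kc n, x ∈ H ∧ ∀ b ∈ B, φ b x = x :=
    fun n x hx => (hH₀mem x).mp (hKcle n hx)
  have hKcbot : ∃ m, Kc m = ⊥ := by
    obtain ⟨m, hm⟩ := hH₀nil
    refine ⟨m, ?_⟩
    rw [hKcdef]
    show (Subgroup.lowerCentralSeries (⊤ : Subgroup ↥H₀) m).map H₀.subtype = ⊥
    rw [hm, Subgroup.map_bot]
  have hKccomm : ∀ n, ∀ x ∈ Kc n, ∀ y ∈ Kc n, ⁅x, y⁆ ∈ Kc (n + 1) := by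
    intro n x hx y hy
    rw [hKcsucc n]
    exact Subgroup.commutator_mem_commutator hx (hKcle n hy)
  -- the downward induction step
  have hstep : ∀ n, Kc (n + 1) ≤ S → Kc n ≤ S := by
    intro n hnext z hz
    obtain ⟨l, hl, v, hv, hzq⟩ := myDEC hq (Kc n) (Kc (n + 1)) (hKcmono n) (hKccomm n)
      (φ a₁) (φ a₂) (hKcinv n a₁) (hKcinv n a₂) (hKcinv (n + 1) a₁) (hKcinv (n + 1) a₂)
      (fun x hx => by
        have hd := hcommB a₁ a₂
        have hx2 := (hKcB n x hx).2 _ hd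
        calc (φ a₁) ((φ a₂) x) = φ (a₁ * a₂) x := by rw [map_mul, MulAut.mul_apply]
          _ = φ ((a₂ * a₁) * ((a₂ * a₁)⁻¹ * (a₁ * a₂))) x := by
              congr 1
              group
          _ = φ (a₂ * a₁) (φ ((a₂ * a₁)⁻¹ * (a₁ * a₂)) x) := by rw [map_mul, MulAut.mul_apply]
          _ = φ (a₂ * a₁) x := by rw [hx2]
          _ = (φ a₂) ((φ a₁) x) := by rw [map_mul, MulAut.mul_apply])
      (fun m => by rw [← map_pow φ a₂ m, ← map_mul, ← map_pow, hq1A, map_one])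
      (by rw [← map_pow, hq1A, map_one])
      (hqN _) z hz
    have hlS : ∀ w ∈ l, w ∈ S := by
      intro w hw
      obtain ⟨hwK, hfix⟩ := hl w hw
      have hwH₀ := (hH₀mem w).mp (hKcle n hwK)
      have hex : ∃ d : A, d ∉ B ∧ φ d w = w := by
        rcases hfix with h | h | ⟨m, hm, h⟩
        · exact ⟨a₁, ha₁, h⟩
        · exact ⟨a₂, ha₂B, h⟩
        · refine ⟨a₁ * a₂ ^ m, ha₂ m hm, ?_⟩
          rw [map_mul, map_pow]
          exact h
      obtain ⟨d, hdB, hdw⟩ := hex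
      exact keyP d hdB w hwH₀.1 hdw hwH₀.2
    have hzqS : z ^ q ∈ S := by
      rw [hzq]
      exact mul_mem (Subgroup.list_prod_mem S hlS) (hnext hv)
    exact myMemOfPow (hordco z) hzqS
  -- conclude H₀ ≤ S
  have hH₀S : H₀ ≤ S := by
    obtain ⟨m, hm⟩ := hKcbot
    have key : ∀ j : ℕ, Kc (m - j) ≤ S := by
      intro j
      induction j with
      | zero => rw [Nat.sub_zero, hm]; exact bot_le
      | succ j ih =>
        rcases le_or_gt m j with hj | hj
        · have h1 : m - (j + 1) = m - j := by omega
          rw [h1]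
          exact ih
        · have h1 : m - j = (m - (j + 1)) + 1 := by omega
          apply hstep
          rw [← h1]
          exact ih
    have := key m
    rwa [Nat.sub_self, hKc0] at this
  -- final assembly
  rw [Subgroup.commutator_le]
  intro x hx h' hh'
  exact (hH₀S hh').2 x hx
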